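/- Let I be a finite nonempty index set, let w : I → ℝ with w_i > 0 and Σ_i w_i = 1, and let x, z ∈ ℝ^n. For each i ∈ I let s_i ∈ ℝ^n satisfy the cutter inequality ⟨s_i, z − x⟩ ≥ ‖s_i‖². Let g ∈ ℝ^n, g ≠ 0, ĝ = g/‖g‖, and suppose ⟨ĝ, s_i⟩ ≤ 0 for all i ∈ I and ⟨ĝ, z − x⟩ ≥ 0. Set p = Σ_i w_i·s_i and suppose p ≠ 0 and ⟨p/‖p‖, ĝ⟩ = −1 + ε for some ε ∈ (0, 1). Define d = p − ⟨p, ĝ⟩·ĝ and x^{SC} = x + (‖p‖²/‖d‖²)·d. Then ‖x^{SC} − z‖² ≤ ‖x − z‖² − (1/(2ε − ε²))·Σ_i w_i·‖s_i‖². -/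

import Mathlib

open scoped RealInnerProductSpace

/-- convergence speed of the surrogate constraint perturbation:
with cutters `s i`, `z` in the surrogate half-space, all `s i` on the far side
(`⟪ĝ, s i⟫ ≤ 0`), `p = ∑ i, w i • s i ≠ 0` with `⟪p/‖p‖, ĝ⟫ = -1 + ε`,
`d = p - ⟪p, ĝ⟫ • ĝ` and `x^SC = x + (‖p‖²/‖d‖²) • d`, one has
`‖x^SC - z‖² ≤ ‖x - z‖² - (1/(2ε - ε²)) ∑ i, w i ‖s i‖²`. -/
theorem surrogate_constraint_perturbation_fejer {n : ℕ} {ι : Type*}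
    [Fintype ι] [Nonempty ι]
    (w : ι → ℝ) (hw : ∀ i, 0 < w i) (hsum : ∑ i, w i = 1)
    (x z : EuclideanSpace ℝ (Fin n))
    (s : ι → EuclideanSpace ℝ (Fin n))
    (hcut : ∀ i, ⟪s i, z - x⟫ ≥ ‖s i‖ ^ 2)
    (g : EuclideanSpace ℝ (Fin n)) (hg : g ≠ 0)
    (ghat : EuclideanSpace ℝ (Fin n)) (hghat : ghat = ‖g‖⁻¹ • g)
    (hsg : ∀ i, ⟪ghat, s i⟫ ≤ 0)
    (hz : 0 ≤ ⟪ghat, z - x⟫)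
    (p : EuclideanSpace ℝ (Fin n)) (hp : p = ∑ i, w i • s i) (hpne : p ≠ 0)
    (ε : ℝ) (hε0 : 0 < ε) (hε1 : ε < 1)
    (hangle : ⟪‖p‖⁻¹ • p, ghat⟫ = -1 + ε)
    (d : EuclideanSpace ℝ (Fin n)) (hd : d = p - ⟪p, ghat⟫ • ghat)
    (xSC : EuclideanSpace ℝ (Fin n))
    (hxSC : xSC = x + (‖p‖ ^ 2 / ‖d‖ ^ 2) • d) :
    ‖xSC - z‖ ^ 2 ≤ ‖x - z‖ ^ 2 - (1 / (2 * ε - ε ^ 2)) * ∑ i, w i * ‖s i‖ ^ 2 := by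
  have hpnorm : (0:ℝ) < ‖p‖ := norm_pos_iff.mpr hpne
  have hT : (0:ℝ) < 2 * ε - ε ^ 2 := by nlinarith
  have hghatnorm : ‖ghat‖ = 1 := by
    rw [hghat, norm_smul, norm_inv, norm_norm]
    field_simp [norm_ne_zero_iff.mpr hg]
  have hpg : ⟪p, ghat⟫ = (-1 + ε) * ‖p‖ := by
    rw [real_inner_smul_left, inv_mul_eq_div, div_eq_iff hpnorm.ne'] at hangle
    exact hangle
  -- norm of d
  have hd2 : ‖d‖ ^ 2 = ‖p‖ ^ 2 * (2 * ε - ε ^ 2) := by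
    have h1 : ‖d‖ ^ 2 = ‖p‖ ^ 2 - ⟪p, ghat⟫ ^ 2 := by
      rw [hd, norm_sub_sq_real, real_inner_smul_right, norm_smul, hghatnorm,
        Real.norm_eq_abs, mul_one, sq_abs]
      ring
    rw [h1, hpg]; ring
  have hdpos : (0:ℝ) < ‖d‖ ^ 2 := by rw [hd2]; positivity
  set S := ∑ i, w i * ‖s i‖ ^ 2 with hS
  have hpz : S ≤ ⟪p, z - x⟫ := by
    rw [hp, sum_inner]
    apply Finset.sum_le_sum
    intro i _
    rw [real_inner_smul_left]
    exact mul_le_mul_of_nonneg_left (hcut i) (hw i).le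
  have hdz : S ≤ ⟪d, z - x⟫ := by
    have h1 : ⟪d, z - x⟫ = ⟪p, z - x⟫ - ⟪p, ghat⟫ * ⟪ghat, z - x⟫ := by
      rw [hd, inner_sub_left, real_inner_smul_left]
    have h2 : ⟪p, ghat⟫ ≤ 0 := by rw [hpg]; nlinarith
    nlinarith [mul_nonneg (neg_nonneg.mpr h2) hz]
  have hpS : ‖p‖ ^ 2 ≤ S := by
    have h1 : ‖p‖ ^ 2 = ∑ i, w i * ⟪s i, p⟫ := by
      rw [← real_inner_self_eq_norm_sq]
      conv_lhs => rw [hp, sum_inner]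
      exact Finset.sum_congr rfl fun i _ => by rw [real_inner_smul_left, ← hp]
    have h2 : ∀ i, ⟪s i, p⟫ ≤ (‖s i‖ ^ 2 + ‖p‖ ^ 2) / 2 := fun i => by
      nlinarith [real_inner_le_norm (s i) p, sq_nonneg (‖s i‖ - ‖p‖)]
    have h3 : ∑ i, w i * ⟪s i, p⟫ ≤ ∑ i, w i * ((‖s i‖ ^ 2 + ‖p‖ ^ 2) / 2) :=
      Finset.sum_le_sum fun i _ => mul_le_mul_of_nonneg_left (h2 i) (hw i).le
    have h4 : ∑ i, w i * ((‖s i‖ ^ 2 + ‖p‖ ^ 2) / 2)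
        = S / 2 + (∑ i, w i) * (‖p‖ ^ 2 / 2) := by
      rw [hS]
      calc ∑ i, w i * ((‖s i‖ ^ 2 + ‖p‖ ^ 2) / 2)
          = ∑ i, (w i * ‖s i‖ ^ 2 / 2 + w i * (‖p‖ ^ 2 / 2)) :=
            Finset.sum_congr rfl fun i _ => by ring
        _ = (∑ i, w i * ‖s i‖ ^ 2) / 2 + (∑ i, w i) * (‖p‖ ^ 2 / 2) := by
            rw [Finset.sum_add_distrib, ← Finset.sum_div, ← Finset.sum_mul]
    rw [hsum] at h4
    linarith [h1 ▸ h3.trans_eq h4]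
  set L := (1:ℝ) / (2 * ε - ε ^ 2) with hL
  have hLpos : 0 < L := by positivity
  have hlam : ‖p‖ ^ 2 / ‖d‖ ^ 2 = L := by
    rw [hd2, hL]
    field_simp
  have hexp : ‖xSC - z‖ ^ 2
      = ‖x - z‖ ^ 2 + 2 * (L * ⟪x - z, d⟫) + L ^ 2 * ‖d‖ ^ 2 := by
    have hx' : xSC - z = (x - z) + L • d := by rw [hxSC, hlam]; abel
    rw [hx', norm_add_sq_real, real_inner_smul_right, norm_smul,
      Real.norm_eq_abs, mul_pow, sq_abs]
  have hxd : ⟪x - z, d⟫ = -⟪d, z - x⟫ := by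
    rw [real_inner_comm, show x - z = -(z - x) by abel, inner_neg_right]
  have hL2 : L ^ 2 * ‖d‖ ^ 2 = L * ‖p‖ ^ 2 := by
    rw [hd2, hL]; field_simp
  rw [hexp, hxd, hL2]
  have h5 := mul_le_mul_of_nonneg_left hdz hLpos.le
  have h6 := mul_le_mul_of_nonneg_left hpS hLpos.le
  linarith
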